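/- Linearization pseudospectrum inclusion (Theorem 5.1, part 1): let P(λ) = λ²M + λC + K with M invertible, and let A = [[-M⁻¹C, -M⁻¹K],[I, 0]] ∈ ℂ^{2n×2n} be the companion linearization. With weights (w_m, w_c, w_k) = (0, 1, 1), for every ε > 0 the polynomial pseudospectrum Λ_ε(P) is contained in the standard matrix pseudospectrum Λ^{st}_{ε̄}(A) := {z : σ_min(A − zI) ≤ ε̄}, where ε̄ = ε‖M⁻¹‖₂. -/

import Mathlib

open Matrix Complex

/-- Euclidean norm of a complex vector. -/
noncomputable def vnorm {ι : Type*} [Fintype ι] (v : ι → ℂ) : ℝ :=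
  Real.sqrt (∑ i, ‖v i‖ ^ 2)

/-- Smallest singular value of a (possibly rectangular) complex matrix:
the infimum of `‖A v‖` over unit vectors `v`. -/
noncomputable def sigmaMin {ι κ : Type*} [Fintype ι] [Fintype κ]
    (A : Matrix ι κ ℂ) : ℝ :=
  sInf {t : ℝ | ∃ v : κ → ℂ, vnorm v = 1 ∧ t = vnorm (A.mulVec v)}

/-- Spectral (operator 2-) norm of a complex matrix. -/
noncomputable def specNorm {ι κ : Type*} [Fintype ι] [Fintype κ]
    (A : Matrix ι κ ℂ) : ℝ :=
  sSup {t : ℝ | ∃ v : κ → ℂ, vnorm v = 1 ∧ t = vnorm (A.mulVec v)}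

/-- The weight/scaling function `p_w(z) = √(w_m² z⁴ + w_c² z² + w_k²)`. -/
noncomputable def pw (wm wc wk z : ℝ) : ℝ :=
  Real.sqrt (wm ^ 2 * z ^ 4 + wc ^ 2 * z ^ 2 + wk ^ 2)

/-- The quadratic matrix polynomial `P(z) = z² M + z C + K`. -/
noncomputable def Ppoly {n : ℕ} (M C K : Matrix (Fin n) (Fin n) ℂ) (z : ℂ) :
    Matrix (Fin n) (Fin n) ℂ :=
  z ^ 2 • M + z • C + K

/-- The column span (range) of a matrix, viewed as a subspace of `ℂⁿ`. -/
noncomputable def colSpan {n r : ℕ} (A : Matrix (Fin n) (Fin r) ℂ) : Submodule ℂ (Fin n → ℂ) :=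
  Submodule.span ℂ (Set.range fun j => fun i => A i j)

/-- The ε-pseudospectrum of the quadratic matrix polynomial `P(λ)=λ²M+λC+K`
(singular value characterization). -/
noncomputable def Lam {n : ℕ} (M C K : Matrix (Fin n) (Fin n) ℂ)
    (ε wm wc wk : ℝ) : Set ℂ :=
  {z : ℂ | sigmaMin (Ppoly M C K z) ≤ ε * pw wm wc wk ‖z‖}

/-- The restricted ε-pseudospectrum determined by the basis matrix `Vm`. -/
noncomputable def LamRes {n r : ℕ} (M C K : Matrix (Fin n) (Fin n) ℂ)
    (Vm : Matrix (Fin n) (Fin r) ℂ) (ε wm wc wk : ℝ) : Set ℂ :=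
  {z : ℂ | sigmaMin (Ppoly M C K z * Vm) ≤ ε * pw wm wc wk ‖z‖}

lemma vnorm_nonneg {ι : Type*} [Fintype ι] (v : ι → ℂ) : 0 ≤ vnorm v :=
  Real.sqrt_nonneg _

lemma vnorm_zero {ι : Type*} [Fintype ι] : vnorm (0 : ι → ℂ) = 0 := by
  simp [vnorm]

lemma vnorm_eq_norm {ι : Type*} [Fintype ι] (v : ι → ℂ) :
    vnorm v = ‖(WithLp.equiv 2 (ι → ℂ)).symm v‖ := by
  rw [EuclideanSpace.norm_eq]
  rfl

lemma vnorm_smul {ι : Type*} [Fintype ι] (c : ℂ) (v : ι → ℂ) :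
    vnorm (c • v) = ‖c‖ * vnorm v := by
  rw [vnorm_eq_norm, vnorm_eq_norm]
  have : (WithLp.equiv 2 (ι → ℂ)).symm (c • v) = c • (WithLp.equiv 2 (ι → ℂ)).symm v := rfl
  rw [this, norm_smul]

lemma vnorm_eq_zero {ι : Type*} [Fintype ι] {v : ι → ℂ} (h : vnorm v = 0) : v = 0 := by
  rw [vnorm_eq_norm] at h
  have := norm_eq_zero.mp h
  exact (WithLp.equiv 2 (ι → ℂ)).symm.injective (by simpa using this)

lemma exists_mulVec_bound {ι κ : Type*} [Fintype ι] [Fintype κ] (A : Matrix ι κ ℂ) :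
    ∃ c : ℝ, ∀ v : κ → ℂ, vnorm (A.mulVec v) ≤ c * vnorm v := by
  classical
  let L₀ : EuclideanSpace ℂ κ →ₗ[ℂ] EuclideanSpace ℂ ι :=
    (WithLp.linearEquiv 2 ℂ (ι → ℂ)).symm.toLinearMap ∘ₗ A.mulVecLin ∘ₗ
      (WithLp.linearEquiv 2 ℂ (κ → ℂ)).toLinearMap
  let L := LinearMap.toContinuousLinearMap L₀
  refine ⟨‖L‖, fun v => ?_⟩
  have h1 : vnorm (A.mulVec v) = ‖L ((WithLp.equiv 2 (κ → ℂ)).symm v)‖ := by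
    rw [vnorm_eq_norm]; rfl
  rw [h1, vnorm_eq_norm]
  exact L.le_opNorm _

lemma bddAbove_S {ι κ : Type*} [Fintype ι] [Fintype κ] (A : Matrix ι κ ℂ) :
    BddAbove {t : ℝ | ∃ v : κ → ℂ, vnorm v = 1 ∧ t = vnorm (A.mulVec v)} := by
  obtain ⟨c, hc⟩ := exists_mulVec_bound A
  exact ⟨c, by rintro t ⟨v, hv, rfl⟩; simpa [hv] using hc v⟩

lemma specNorm_nonneg {ι κ : Type*} [Fintype ι] [Fintype κ] [Nonempty κ]
    (A : Matrix ι κ ℂ) : 0 ≤ specNorm A := by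
  classical
  obtain ⟨i⟩ := ‹Nonempty κ›
  have hmem : vnorm (A.mulVec (Pi.single i 1)) ∈
      {t : ℝ | ∃ v : κ → ℂ, vnorm v = 1 ∧ t = vnorm (A.mulVec v)} := by
    refine ⟨Pi.single i 1, ?_, rfl⟩
    simp [vnorm, Pi.single_apply, apply_ite]
  exact le_trans (vnorm_nonneg _) (le_csSup (bddAbove_S A) hmem)

lemma mulVec_vnorm_le {ι κ : Type*} [Fintype ι] [Fintype κ] (A : Matrix ι κ ℂ)
    (v : κ → ℂ) : vnorm (A.mulVec v) ≤ specNorm A * vnorm v := by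
  rcases eq_or_ne v 0 with rfl | hv
  · simp [Matrix.mulVec_zero, vnorm_zero]
  · have hr : 0 < vnorm v := by
      rcases lt_or_eq_of_le (vnorm_nonneg v) with h | h
      · exact h
      · exact absurd (vnorm_eq_zero h.symm) hv
    set r := vnorm v with hrdef
    have habs : ‖((r : ℂ)⁻¹)‖ = r⁻¹ := by
      rw [norm_inv, Complex.norm_of_nonneg hr.le]
    have hunit : vnorm ((r : ℂ)⁻¹ • v) = 1 := by
      rw [vnorm_smul, habs, ← hrdef, inv_mul_cancel₀ hr.ne']
    have hmem : vnorm (A.mulVec ((r : ℂ)⁻¹ • v)) ≤ specNorm A :=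
      le_csSup (bddAbove_S A) ⟨_, hunit, rfl⟩
    rw [Matrix.mulVec_smul, vnorm_smul, habs] at hmem
    calc vnorm (A.mulVec v) = r * (r⁻¹ * vnorm (A.mulVec v)) := by
          field_simp
      _ ≤ r * specNorm A := mul_le_mul_of_nonneg_left hmem hr.le
      _ = specNorm A * r := mul_comm _ _

lemma sigmaMin_le {ι κ : Type*} [Fintype ι] [Fintype κ] (A : Matrix ι κ ℂ)
    {v : κ → ℂ} (hv : vnorm v = 1) : sigmaMin A ≤ vnorm (A.mulVec v) :=
  csInf_le ⟨0, by rintro t ⟨w, _, rfl⟩; exact vnorm_nonneg _⟩ ⟨v, hv, rfl⟩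

lemma vnorm_sumElim_zero {ι κ : Type*} [Fintype ι] [Fintype κ] (u : ι → ℂ) :
    vnorm (Sum.elim u (0 : κ → ℂ)) = vnorm u := by
  simp [vnorm, Fintype.sum_sum_type]


/-- linearization inclusion: with `M` invertible and weights
`(w_m,w_c,w_k) = (0,1,1)`, the polynomial ε-pseudospectrum (perturbation definition)
is contained in the standard `ε̄`-pseudospectrum of the companion linearization
`A = [[-M⁻¹C, -M⁻¹K],[I, 0]]`, where `ε̄ = ε‖M⁻¹‖₂`. -/
theorem linearization_pseudospectrum_inclusion
    {n : ℕ} (hn : 0 < n)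
    (M C K : Matrix (Fin n) (Fin n) ℂ) (hM : IsUnit M.det)
    (ε : ℝ) (hε : 0 < ε) :
    {z : ℂ | ∃ ΔC ΔK : Matrix (Fin n) (Fin n) ℂ,
        specNorm (Matrix.fromCols ΔC ΔK) ≤ ε ∧
        (Ppoly M C K z + z • ΔC + ΔK).det = 0} ⊆
      {z : ℂ | sigmaMin
        (Matrix.fromBlocks (-(M⁻¹ * C)) (-(M⁻¹ * K)) (1 : Matrix (Fin n) (Fin n) ℂ) 0
          - z • 1) ≤ ε * specNorm M⁻¹} := by
  haveI : Nonempty (Fin n) := ⟨⟨0, hn⟩⟩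
  rintro z ⟨ΔC, ΔK, hΔ, hdet⟩
  obtain ⟨x, hx, hx0⟩ := Matrix.exists_mulVec_eq_zero_iff.mpr hdet
  set Az : Matrix (Fin n ⊕ Fin n) (Fin n ⊕ Fin n) ℂ :=
    Matrix.fromBlocks (-(M⁻¹ * C)) (-(M⁻¹ * K)) (1 : Matrix (Fin n) (Fin n) ℂ) 0
      - z • 1 with hAz
  set v : Fin n ⊕ Fin n → ℂ := Sum.elim (z • x) x with hv
  set q : Fin n → ℂ := (Matrix.fromCols ΔC ΔK).mulVec v with hqdef
  have hMi : M⁻¹ *ᵥ (M *ᵥ x) = x := by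
    rw [Matrix.mulVec_mulVec, Matrix.nonsing_inv_mul M hM, Matrix.one_mulVec]
  have hP : z ^ 2 • (M *ᵥ x) + z • (C *ᵥ x) + (K *ᵥ x)
      + (z • (ΔC *ᵥ x) + ΔK *ᵥ x) = 0 := by
    have := hx0
    simp only [Ppoly, Matrix.add_mulVec, Matrix.smul_mulVec] at this
    rw [← this]; abel
  have hP2 : z • (ΔC *ᵥ x) + ΔK *ᵥ x
      = -(z ^ 2 • (M *ᵥ x) + z • (C *ᵥ x) + (K *ᵥ x)) :=
    eq_neg_of_add_eq_zero_left (by rw [← hP]; abel)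
  have hq : q = z • (ΔC *ᵥ x) + ΔK *ᵥ x := by
    rw [hqdef, hv, Matrix.fromCols_mulVec_sumElim, Matrix.mulVec_smul]
  have hkey : Az.mulVec v = Sum.elim (M⁻¹ *ᵥ q) 0 := by
    have hfb : Az.mulVec v = Sum.elim
        (-(M⁻¹ * C) *ᵥ (z • x) + -(M⁻¹ * K) *ᵥ x - z • (z • x))
        ((1 : Matrix (Fin n) (Fin n) ℂ) *ᵥ (z • x) + (0 : Matrix (Fin n) (Fin n) ℂ) *ᵥ x
          - z • x) := by
      rw [hAz, Matrix.sub_mulVec, Matrix.smul_mulVec, Matrix.one_mulVec]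
      funext i
      cases i <;> simp [hv, Matrix.fromBlocks_mulVec]
    have ha : -(M⁻¹ * C) *ᵥ (z • x) + -(M⁻¹ * K) *ᵥ x - z • (z • x) = M⁻¹ *ᵥ q := by
      rw [hq, hP2]
      simp only [Matrix.mulVec_neg, Matrix.mulVec_add, Matrix.mulVec_smul, hMi,
        Matrix.neg_mulVec, ← Matrix.mulVec_mulVec]
      module
    have hb : (1 : Matrix (Fin n) (Fin n) ℂ) *ᵥ (z • x) + (0 : Matrix (Fin n) (Fin n) ℂ) *ᵥ x
        - z • x = 0 := by
      simp [Matrix.one_mulVec, Matrix.zero_mulVec]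
    rw [hfb, ha, hb]
  have hvne : v ≠ 0 := fun h => hx (funext fun i => congrFun h (Sum.inr i))
  have hr : 0 < vnorm v := by
    rcases lt_or_eq_of_le (vnorm_nonneg v) with h | h
    · exact h
    · exact absurd (vnorm_eq_zero h.symm) hvne
  set r := vnorm v with hrdef
  have habs : ‖((r : ℂ)⁻¹)‖ = r⁻¹ := by
    rw [norm_inv, Complex.norm_of_nonneg hr.le]
  have hunit : vnorm ((r : ℂ)⁻¹ • v) = 1 := by
    rw [vnorm_smul, habs, ← hrdef, inv_mul_cancel₀ hr.ne']
  have h1 : sigmaMin Az ≤ r⁻¹ * vnorm (Az.mulVec v) := by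
    have := sigmaMin_le Az hunit
    rwa [Matrix.mulVec_smul, vnorm_smul, habs] at this
  have h2 : vnorm (Az.mulVec v) = vnorm (M⁻¹ *ᵥ q) := by
    rw [hkey, vnorm_sumElim_zero]
  have h3 : vnorm (M⁻¹ *ᵥ q) ≤ specNorm M⁻¹ * (ε * r) := by
    refine le_trans (mulVec_vnorm_le M⁻¹ q) ?_
    refine mul_le_mul_of_nonneg_left ?_ (specNorm_nonneg M⁻¹)
    calc vnorm q ≤ specNorm (Matrix.fromCols ΔC ΔK) * r := mulVec_vnorm_le _ v
      _ ≤ ε * r := mul_le_mul_of_nonneg_right hΔ hr.le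
  have : sigmaMin Az ≤ r⁻¹ * (specNorm M⁻¹ * (ε * r)) := by
    refine le_trans h1 ?_
    rw [h2]
    exact mul_le_mul_of_nonneg_left h3 (inv_nonneg.mpr hr.le)
  calc sigmaMin Az ≤ r⁻¹ * (specNorm M⁻¹ * (ε * r)) := this
    _ = ε * specNorm M⁻¹ := by field_simp
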